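/- Let X be a Banach space and Y a Banach space continuously embedded in X. Let ρ : (0,∞) → (0,∞) be integrable and for each t > 0 let C(t) : Y → X be a linear map with ‖C(t)y‖_X ≤ ρ(t) ‖y‖_Y for all y ∈ Y, with t ↦ C(t)y continuous on (0,∞) for each y ∈ Y. If φ ∈ PAP₀(Y), then the function t ↦ ∫_{−∞}^{t} C(t−s)φ(s) ds belongs to PAP₀(X). -/

import Mathlib

open MeasureTheory Filter Topology Bornology

noncomputable section

/-- `PAPZeroFn f` : `f` is bounded continuous and `(1/(2r)) ∫_{-r}^r ‖f s‖ ds → 0` as `r → ∞`. -/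
def PAPZeroFn {Z : Type*} [NormedAddCommGroup Z] (f : ℝ → Z) : Prop :=
  Continuous f ∧ (∃ M : ℝ, ∀ t : ℝ, ‖f t‖ ≤ M) ∧
  Tendsto (fun r : ℝ => (1 / (2 * r)) * ∫ s in (-r)..r, ‖f s‖) atTop (𝓝 0)

lemma aux_floor_tendsto (u : ℝ) :
    Tendsto (fun n : ℕ => ((⌊u * ((n : ℝ) + 1)⌋ : ℤ) : ℝ) / ((n : ℝ) + 1)) atTop (𝓝 u) := by
  have hN : ∀ n : ℕ, (0:ℝ) < (n:ℝ) + 1 := fun n => by positivity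
  apply tendsto_of_tendsto_of_tendsto_of_le_of_le
    (g := fun n : ℕ => u - 1/((n:ℝ)+1)) (h := fun _ : ℕ => u)
  · have h0 : Tendsto (fun n : ℕ => 1/((n:ℝ)+1)) atTop (𝓝 0) :=
      tendsto_one_div_add_atTop_nhds_zero_nat
    simpa using tendsto_const_nhds.sub h0
  · exact tendsto_const_nhds
  · intro n
    have h1 : u * ((n:ℝ)+1) - 1 ≤ ((⌊u * ((n:ℝ)+1)⌋ : ℤ) : ℝ) := by
      have := Int.sub_one_lt_floor (u * ((n:ℝ)+1)); linarith
    rw [le_div_iff₀ (hN n)]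
    have h2 : (u - 1/((n:ℝ)+1)) * ((n:ℝ)+1) = u * ((n:ℝ)+1) - 1 := by
      field_simp
    rw [h2]; exact h1
  · intro n
    rw [div_le_iff₀ (hN n)]
    exact Int.floor_le _

lemma aux_meas {X Y : Type*} [NormedAddCommGroup X] [NormedSpace ℝ X]
    [NormedAddCommGroup Y] [NormedSpace ℝ Y]
    (C : ℝ → Y →L[ℝ] X) (hCcont : ∀ y : Y, ContinuousOn (fun t : ℝ => C t y) (Set.Ioi (0:ℝ)))
    (g : ℝ → Y) (hg : Continuous g) :
    AEStronglyMeasurable (fun u : ℝ => C u (g u)) (volume.restrict (Set.Ioi (0:ℝ))) := by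
  set f : ℕ → ℝ → X := fun n u => C u (g (((⌊u * ((n:ℝ)+1)⌋ : ℤ) : ℝ) / ((n:ℝ)+1))) with hf
  have hfm : ∀ n, AEStronglyMeasurable (f n) (volume.restrict (Set.Ioi (0:ℝ))) := by
    intro n
    have hN : (0:ℝ) < (n:ℝ)+1 := by positivity
    have hcover : Set.Ioi (0:ℝ) =
        ⋃ k : ℤ, (Set.Ioi (0:ℝ) ∩ Set.Ico ((k:ℝ)/((n:ℝ)+1)) (((k:ℝ)+1)/((n:ℝ)+1))) := by
      ext u
      simp only [Set.mem_iUnion, Set.mem_inter_iff, Set.mem_Ioi, Set.mem_Ico]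
      constructor
      · intro hu
        refine ⟨⌊u * ((n:ℝ)+1)⌋, hu, ?_, ?_⟩
        · rw [div_le_iff₀ hN]; exact Int.floor_le _
        · rw [lt_div_iff₀ hN]; exact Int.lt_floor_add_one _
      · rintro ⟨k, hk, -⟩; exact hk
    rw [hcover, aestronglyMeasurable_iUnion_iff]
    intro k
    apply ContinuousOn.aestronglyMeasurable ?_ (measurableSet_Ioi.inter measurableSet_Ico)
    have hfloor : ∀ u ∈ Set.Ico ((k:ℝ)/((n:ℝ)+1)) (((k:ℝ)+1)/((n:ℝ)+1)),
        ⌊u * ((n:ℝ)+1)⌋ = k := by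
      intro u hu
      rw [Int.floor_eq_iff]
      constructor
      · exact (div_le_iff₀ hN).1 hu.1
      · have := (lt_div_iff₀ hN).1 hu.2
        push_cast
        linarith
    exact ContinuousOn.congr
      ((hCcont (g ((k:ℝ)/((n:ℝ)+1)))).mono Set.inter_subset_left)
      (fun u hu => by simp only [hf]; rw [hfloor u hu.2])
  apply aestronglyMeasurable_of_tendsto_ae atTop hfm
  apply Eventually.of_forall
  intro u
  exact (((C u).continuous.comp hg).tendsto u).comp (aux_floor_tendsto u)

theorem convolution_kernel_preserves_PAP0
    {X Y : Type*} [NormedAddCommGroup X] [NormedSpace ℝ X] [CompleteSpace X]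
    [NormedAddCommGroup Y] [NormedSpace ℝ Y] [CompleteSpace Y]
    -- `Y` is continuously embedded in `X` via `J`
    (J : Y →L[ℝ] X) (hJinj : Function.Injective J)
    -- the kernel `C` with `‖C t y‖ ≤ ρ t * ‖y‖` for `t > 0`, `ρ` integrable
    (ρ : ℝ → ℝ) (hρpos : ∀ t : ℝ, 0 < t → 0 < ρ t)
    (hρint : IntegrableOn ρ (Set.Ioi (0 : ℝ)))
    (C : ℝ → Y →L[ℝ] X)
    (hC : ∀ t : ℝ, 0 < t → ∀ y : Y, ‖C t y‖ ≤ ρ t * ‖y‖)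
    (hCcont : ∀ y : Y, ContinuousOn (fun t : ℝ => C t y) (Set.Ioi (0 : ℝ)))
    -- `φ ∈ PAP₀(Y)`
    (φ : ℝ → Y) (hφ : PAPZeroFn φ) :
    PAPZeroFn (fun t : ℝ => ∫ s in Set.Iio t, C (t - s) (φ s)) := by
  obtain ⟨hφc, ⟨M₀, hM₀⟩, hφmean⟩ := hφ
  set M : ℝ := max M₀ 0 with hM
  have hMnn : (0:ℝ) ≤ M := le_max_right _ _
  have hφM : ∀ t, ‖φ t‖ ≤ M := fun t => (hM₀ t).trans (le_max_left _ _)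
  set μ : Measure ℝ := volume.restrict (Set.Ioi (0:ℝ)) with hμ
  have hρm : AEStronglyMeasurable ρ μ := hρint.1
  have hρnn : ∀ᵐ u ∂μ, 0 ≤ ρ u :=
    (ae_restrict_iff' measurableSet_Ioi).2 (.of_forall fun u hu => (hρpos u hu).le)
  have hboundint : Integrable (fun u => ρ u * M) μ := hρint.mul_const M
  have hmeas : ∀ t, AEStronglyMeasurable (fun u => C u (φ (t - u))) μ := fun t =>
    aux_meas C hCcont (fun s => φ (t - s)) (hφc.comp (continuous_const.sub continuous_id))
  have hptb : ∀ t, ∀ᵐ u ∂μ, ‖C u (φ (t - u))‖ ≤ ρ u * M := fun t =>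
    (ae_restrict_iff' measurableSet_Ioi).2 (.of_forall fun u hu =>
      (hC u hu _).trans (mul_le_mul_of_nonneg_left (hφM _) (hρpos u hu).le))
  have hint : ∀ t, Integrable (fun u => C u (φ (t - u))) μ := fun t =>
    hboundint.mono' (hmeas t) (hptb t)
  -- change of variables
  have hswap : ∀ t : ℝ, (∫ s in Set.Iio t, C (t - s) (φ s)) = ∫ u in Set.Ioi (0:ℝ), C u (φ (t - u)) := by
    intro t
    have h1 : (∫ s in Set.Iio t, C (t - s) (φ s))
        = ∫ s, Set.indicator (Set.Iio t) (fun s => C (t - s) (φ s)) s :=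
      (integral_indicator measurableSet_Iio).symm
    have h2 : (∫ s, Set.indicator (Set.Iio t) (fun s => C (t - s) (φ s)) s)
        = ∫ u, Set.indicator (Set.Iio t) (fun s => C (t - s) (φ s)) (t - u) :=
      (integral_sub_left_eq_self (fun s => Set.indicator (Set.Iio t)
        (fun s => C (t - s) (φ s)) s) volume t).symm
    have h3 : ∀ u : ℝ, Set.indicator (Set.Iio t) (fun s => C (t - s) (φ s)) (t - u)
        = Set.indicator (Set.Ioi (0:ℝ)) (fun u => C u (φ (t - u))) u := by
      intro u
      by_cases hu : 0 < u
      · rw [Set.indicator_of_mem (show t - u ∈ Set.Iio t by simp [Set.mem_Iio]; linarith),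
          Set.indicator_of_mem (Set.mem_Ioi.2 hu)]
        simp [sub_sub_cancel]
      · rw [Set.indicator_of_notMem (show t - u ∉ Set.Iio t by
            simp [Set.mem_Iio]; linarith [not_lt.1 hu]),
          Set.indicator_of_notMem (by simpa [Set.mem_Ioi] using hu)]
    rw [h1, h2]
    simp_rw [h3]
    exact integral_indicator measurableSet_Ioi
  have hFeq : (fun t : ℝ => ∫ s in Set.Iio t, C (t - s) (φ s))
      = fun t : ℝ => ∫ u in Set.Ioi (0:ℝ), C u (φ (t - u)) := funext hswap
  rw [hFeq]
  unfold PAPZeroFn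
  have hFcont : Continuous fun t : ℝ => ∫ u in Set.Ioi (0:ℝ), C u (φ (t - u)) := by
    apply continuous_of_dominated hmeas hptb hboundint
    apply (ae_restrict_iff' measurableSet_Ioi).2
    apply Eventually.of_forall
    intro u _
    exact (C u).continuous.comp (hφc.comp (continuous_id.sub continuous_const))
  refine ⟨hFcont, ⟨(∫ u in Set.Ioi (0:ℝ), ρ u) * M, fun t => ?_⟩, ?_⟩
  · calc ‖∫ u in Set.Ioi (0:ℝ), C u (φ (t - u))‖ ≤ ∫ u in Set.Ioi (0:ℝ), ρ u * M :=
          norm_integral_le_of_norm_le hboundint (hptb t)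
      _ = (∫ u in Set.Ioi (0:ℝ), ρ u) * M := integral_mul_const _ _
  -- the mean-zero part
  · have hφiint : ∀ a b : ℝ, IntervalIntegrable (fun t => ‖φ t‖) volume a b :=
      fun a b => (hφc.norm).intervalIntegrable a b
    set Φ : ℝ → ℝ := fun x => ∫ t in (0:ℝ)..x, ‖φ t‖ with hΦdef
    have hΦc : Continuous Φ :=
      intervalIntegral.continuous_primitive hφiint 0
    have hBeq : ∀ r u : ℝ, (∫ t in (-r)..r, ‖φ (t - u)‖) = Φ (r - u) - Φ (-r - u) := by
      intro r u
      rw [intervalIntegral.integral_comp_sub_right (fun t => ‖φ t‖) u]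
      rw [intervalIntegral.integral_interval_sub_left (hφiint 0 (r - u)) (hφiint 0 (-r - u))]
    have hBcont : ∀ r : ℝ, Continuous fun u : ℝ => ∫ t in (-r)..r, ‖φ (t - u)‖ := by
      intro r
      have : (fun u : ℝ => ∫ t in (-r)..r, ‖φ (t - u)‖)
          = fun u => Φ (r - u) - Φ (-r - u) := funext (hBeq r)
      rw [this]
      exact (hΦc.comp (continuous_const.sub continuous_id)).sub
        (hΦc.comp (continuous_const.sub continuous_id))
    have hBnn : ∀ r u : ℝ, -r ≤ r → 0 ≤ ∫ t in (-r)..r, ‖φ (t - u)‖ := fun r u h =>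
      intervalIntegral.integral_nonneg h (fun x _ => norm_nonneg _)
    have hBiint : ∀ r u : ℝ, IntervalIntegrable (fun t => ‖φ (t - u)‖) volume (-r) r :=
      fun r u => ((hφc.comp (continuous_id.sub continuous_const)).norm).intervalIntegrable _ _
    have hBleM : ∀ r u : ℝ, 0 < r → (∫ t in (-r)..r, ‖φ (t - u)‖) ≤ 2 * r * M := by
      intro r u hr
      have h1 : (∫ t in (-r)..r, ‖φ (t - u)‖) ≤ ∫ _t in (-r)..r, M :=
        intervalIntegral.integral_mono_on (by linarith) (hBiint r u)
          intervalIntegrable_const (fun x _ => hφM _)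
      have h2 : (∫ _t in (-r)..r, M) = 2 * r * M := by
        rw [intervalIntegral.integral_const, smul_eq_mul]; ring
      linarith
    have hGmeas : ∀ t : ℝ, AEStronglyMeasurable (fun u => ρ u * ‖φ (t - u)‖) μ := fun t =>
      hρm.mul ((hφc.comp (continuous_const.sub continuous_id)).norm.aestronglyMeasurable)
    have hGptb : ∀ t : ℝ, ∀ᵐ u ∂μ, ‖ρ u * ‖φ (t - u)‖‖ ≤ ρ u * M := by
      intro t
      filter_upwards [hρnn] with u hu
      rw [Real.norm_eq_abs, abs_mul, abs_of_nonneg hu, abs_norm]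
      exact mul_le_mul_of_nonneg_left (hφM _) hu
    have hGint : ∀ t : ℝ, Integrable (fun u => ρ u * ‖φ (t - u)‖) μ := fun t =>
      hboundint.mono' (hGmeas t) (hGptb t)
    have hFG : ∀ t : ℝ, ‖∫ u in Set.Ioi (0:ℝ), C u (φ (t - u))‖
        ≤ ∫ u, ρ u * ‖φ (t - u)‖ ∂μ := by
      intro t
      apply norm_integral_le_of_norm_le (hGint t)
      exact (ae_restrict_iff' measurableSet_Ioi).2
        (Eventually.of_forall fun u hu => hC u hu _)
    have hGcont : Continuous fun t : ℝ => ∫ u, ρ u * ‖φ (t - u)‖ ∂μ := by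
      apply continuous_of_dominated hGmeas hGptb hboundint
      exact Eventually.of_forall fun u =>
        continuous_const.mul ((hφc.comp (continuous_id.sub continuous_const)).norm)
    have hkey : ∀ r : ℝ, 0 < r →
        (1 / (2*r)) * ∫ t in (-r)..r, ‖∫ u in Set.Ioi (0:ℝ), C u (φ (t - u))‖
          ≤ ∫ u, ρ u * ((1/(2*r)) * ∫ t in (-r)..r, ‖φ (t - u)‖) ∂μ := by
      intro r hr
      have hnn2r : (0:ℝ) ≤ 1/(2*r) := by positivity
      have step1 : (∫ t in (-r)..r, ‖∫ u in Set.Ioi (0:ℝ), C u (φ (t - u))‖)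
          ≤ ∫ t in (-r)..r, ∫ u, ρ u * ‖φ (t - u)‖ ∂μ :=
        intervalIntegral.integral_mono_on (by linarith)
          (hFcont.norm.intervalIntegrable _ _) (hGcont.intervalIntegrable _ _)
          (fun t _ => hFG t)
      have hprod : Integrable (Function.uncurry fun t u => ρ u * ‖φ (t - u)‖)
          ((volume.restrict (Set.Ioc (-r) r)).prod μ) := by
        have hm : AEStronglyMeasurable (Function.uncurry fun t u : ℝ => ρ u * ‖φ (t - u)‖)
            ((volume.restrict (Set.Ioc (-r) r)).prod μ) :=
          (hρm.comp_snd).mul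
            ((hφc.comp (continuous_fst.sub continuous_snd)).norm).aestronglyMeasurable
        rw [integrable_prod_iff hm]
        constructor
        · exact Eventually.of_forall fun t => hGint t
        · have hcont2 : Continuous fun t : ℝ => ∫ u, ‖ρ u * ‖φ (t - u)‖‖ ∂μ := by
            refine continuous_of_dominated (fun t => (hGmeas t).norm) (fun t => ?_)
              hboundint ?_
            · filter_upwards [hGptb t] with u hu
              rwa [norm_norm]
            · exact Eventually.of_forall fun u =>
                (continuous_const.mul
                  ((hφc.comp (continuous_id.sub continuous_const)).norm)).norm
          exact hcont2.integrableOn_Ioc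
      have step2 := integral_integral_swap hprod
      have step3 : ∀ u : ℝ, (∫ t in Set.Ioc (-r) r, ρ u * ‖φ (t - u)‖)
          = ρ u * ∫ t in (-r)..r, ‖φ (t - u)‖ := by
        intro u
        rw [MeasureTheory.integral_const_mul,
          intervalIntegral.integral_of_le (show (-r:ℝ) ≤ r by linarith)]
      have step4 : (∫ t in (-r)..r, ∫ u, ρ u * ‖φ (t - u)‖ ∂μ)
          = ∫ u, (ρ u * ∫ t in (-r)..r, ‖φ (t - u)‖) ∂μ := by
        rw [intervalIntegral.integral_of_le (show (-r:ℝ) ≤ r by linarith)]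
        rw [show (∫ t in Set.Ioc (-r) r, ∫ u, ρ u * ‖φ (t - u)‖ ∂μ)
            = ∫ u, (∫ t in Set.Ioc (-r) r, ρ u * ‖φ (t - u)‖) ∂μ from step2]
        exact integral_congr_ae (Eventually.of_forall fun u => step3 u)
      calc (1/(2*r)) * ∫ t in (-r)..r, ‖∫ u in Set.Ioi (0:ℝ), C u (φ (t - u))‖
          ≤ (1/(2*r)) * ∫ t in (-r)..r, ∫ u, ρ u * ‖φ (t - u)‖ ∂μ :=
            mul_le_mul_of_nonneg_left step1 hnn2r
        _ = (1/(2*r)) * ∫ u, (ρ u * ∫ t in (-r)..r, ‖φ (t - u)‖) ∂μ := by rw [step4]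
        _ = ∫ u, ((1/(2*r)) * (ρ u * ∫ t in (-r)..r, ‖φ (t - u)‖)) ∂μ :=
            (MeasureTheory.integral_const_mul _ _).symm
        _ = ∫ u, ρ u * ((1/(2*r)) * ∫ t in (-r)..r, ‖φ (t - u)‖) ∂μ := by
            apply integral_congr_ae
            apply Eventually.of_forall
            intro u
            ring
    have hdom : Tendsto
        (fun r : ℝ => ∫ u, ρ u * ((1/(2*r)) * ∫ t in (-r)..r, ‖φ (t - u)‖) ∂μ)
        atTop (𝓝 0) := by
      have h := tendsto_integral_filter_of_dominated_convergence (μ := μ)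
        (l := (atTop : Filter ℝ))
        (F := fun r u => ρ u * ((1/(2*r)) * ∫ t in (-r)..r, ‖φ (t - u)‖))
        (f := fun _ => (0:ℝ)) (bound := fun u => ρ u * M)
        ?_ ?_ hboundint ?_
      · simpa using h
      · exact Eventually.of_forall fun r =>
          hρm.mul ((continuous_const.mul (hBcont r)).aestronglyMeasurable)
      · filter_upwards [eventually_gt_atTop (0:ℝ)] with r hr
        filter_upwards [hρnn] with u hu
        have hb1 : 0 ≤ (1/(2*r)) * ∫ t in (-r)..r, ‖φ (t - u)‖ :=
          mul_nonneg (by positivity) (hBnn r u (by linarith))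
        have hb2 : (1/(2*r)) * (∫ t in (-r)..r, ‖φ (t - u)‖) ≤ M := by
          have h3 := hBleM r u hr
          have hr' : r ≠ 0 := ne_of_gt hr
          calc (1/(2*r)) * (∫ t in (-r)..r, ‖φ (t - u)‖)
              ≤ (1/(2*r)) * (2*r*M) := mul_le_mul_of_nonneg_left h3 (by positivity)
            _ = M := by field_simp
        rw [Real.norm_eq_abs, abs_mul, abs_of_nonneg hu, abs_of_nonneg hb1]
        exact mul_le_mul_of_nonneg_left hb2 hu
      · apply (ae_restrict_iff' measurableSet_Ioi).2
        apply Eventually.of_forall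
        intro u hu
        have hu' : 0 < u := Set.mem_Ioi.1 hu
        have hAz : Tendsto (fun r : ℝ => (1/(2*r)) * ∫ t in (-r)..r, ‖φ (t - u)‖)
            atTop (𝓝 0) := by
          refine squeeze_zero'
            (g := fun r : ℝ => ((r+u)/r) *
              ((1/(2*(r+u))) * ∫ t in (-(r+u))..(r+u), ‖φ t‖)) ?_ ?_ ?_
          · filter_upwards [eventually_gt_atTop (0:ℝ)] with r hr
            exact mul_nonneg (by positivity) (hBnn r u (by linarith))
          · filter_upwards [eventually_gt_atTop (0:ℝ)] with r hr
            have hru : 0 < r + u := by linarith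
            have hmono : (∫ t in (-r)..r, ‖φ (t - u)‖)
                ≤ ∫ t in (-(r+u))..(r+u), ‖φ t‖ := by
              rw [intervalIntegral.integral_comp_sub_right (fun t => ‖φ t‖) u]
              apply intervalIntegral.integral_mono_interval
                (le_of_eq (by ring)) (by linarith) (by linarith)
                (Eventually.of_forall fun x => norm_nonneg _) (hφiint _ _)
            have heq : (1/(2*r)) * ∫ t in (-(r+u))..(r+u), ‖φ t‖
                = ((r+u)/r) * ((1/(2*(r+u))) * ∫ t in (-(r+u))..(r+u), ‖φ t‖) := by
              have h1 : ((r+u)/r) * (1/(2*(r+u))) = 1/(2*r) := by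
                field_simp
              rw [← mul_assoc, h1]
            calc (1/(2*r)) * ∫ t in (-r)..r, ‖φ (t - u)‖
                ≤ (1/(2*r)) * ∫ t in (-(r+u))..(r+u), ‖φ t‖ :=
                  mul_le_mul_of_nonneg_left hmono (by positivity)
              _ = ((r+u)/r) * ((1/(2*(r+u))) * ∫ t in (-(r+u))..(r+u), ‖φ t‖) := heq
          · have h1 : Tendsto (fun r : ℝ => (r+u)/r) atTop (𝓝 1) := by
              have h2 : Tendsto (fun r : ℝ => 1 + u/r) atTop (𝓝 1) := by
                simpa using
                  (tendsto_const_nhds (x := (1:ℝ))).add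
                    (Tendsto.div_atTop (tendsto_const_nhds (x := u)) tendsto_id)
              apply h2.congr'
              filter_upwards [eventually_ne_atTop (0:ℝ)] with r hrne
              field_simp
            have h2 : Tendsto
                (fun r : ℝ => (1/(2*(r+u))) * ∫ t in (-(r+u))..(r+u), ‖φ t‖)
                atTop (𝓝 0) :=
              hφmean.comp (tendsto_atTop_add_const_right atTop u tendsto_id)
            simpa using h1.mul h2
        have h4 := hAz.const_mul (ρ u)
        simpa using h4
    apply squeeze_zero'
      (g := fun r : ℝ => ∫ u, ρ u * ((1/(2*r)) * ∫ t in (-r)..r, ‖φ (t - u)‖) ∂μ)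
    · filter_upwards [eventually_gt_atTop (0:ℝ)] with r hr
      exact mul_nonneg (by positivity)
        (intervalIntegral.integral_nonneg (by linarith) fun x _ => norm_nonneg _)
    · filter_upwards [eventually_gt_atTop (0:ℝ)] with r hr
      exact hkey r hr
    · exact hdom
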